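/- Let (a_1, …, a_m) and (b_1, …, b_n) be complementary sequences of integers all ≥ 2 with n ≥ 2 and b_n = 2. Then a_m ≥ 3, and the sequences (a_1, …, a_{m−1}, a_m − 1) and (b_1, …, b_{n−1}) are complementary. (This is the effect of blowing down the −1 in the linear graph (−a_1, …, −a_m, −1, −b_n, …, −b_1).) -/

import Mathlib

/-- Negative continued fraction `[a₁, …, aₙ]⁻`. -/
def ncf : List ℚ → ℚ
  | [] => 0
  | [a] => a
  | a :: b :: l => a - 1 / ncf (b :: l)

/-- Negative continued fraction of a list of integers. -/
def ncfZ (l : List ℤ) : ℚ := ncf (l.map (fun x => (x : ℚ)))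

/-- Two sequences of integers, all ≥ 2, are complementary if the reciprocals of their
negative continued fractions sum to 1. -/
def Complementary (a b : List ℤ) : Prop :=
  a ≠ [] ∧ b ≠ [] ∧ (∀ x ∈ a, 2 ≤ x) ∧ (∀ x ∈ b, 2 ≤ x) ∧
    1 / ncfZ a + 1 / ncfZ b = 1

/-- The standard negative definite bilinear form on `ℤ^N`. -/
def negForm {N : ℕ} (x y : Fin N → ℤ) : ℤ := -∑ i, x i * y i

/-- Numerator of the negative continued fraction. -/
def ncfP : List ℤ → ℤ
  | [] => 1
  | [a] => a
  | a :: b :: l => a * ncfP (b :: l) - ncfP l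

/-- Denominator of the negative continued fraction. -/
def ncfQ : List ℤ → ℤ
  | [] => 0
  | _ :: t => ncfP t

def ncfR : List ℤ → ℤ
  | [] => 0
  | [_] => -1
  | a :: b :: l => a * ncfR (b :: l) - ncfR l

def ncfS : List ℤ → ℤ
  | [] => 1
  | _ :: t => ncfR t

lemma ncfP_cons (a : ℤ) (t : List ℤ) : ncfP (a :: t) = a * ncfP t - ncfQ t := by
  cases t with
  | nil => simp [ncfP, ncfQ]
  | cons b l => simp [ncfP, ncfQ]

lemma ncfR_cons (a : ℤ) (t : List ℤ) : ncfR (a :: t) = a * ncfR t - ncfS t := by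
  cases t with
  | nil => simp [ncfR, ncfS]
  | cons b l => simp [ncfR, ncfS]

lemma ncfQ_cons (a : ℤ) (t : List ℤ) : ncfQ (a :: t) = ncfP t := rfl

lemma ncfS_cons (a : ℤ) (t : List ℤ) : ncfS (a :: t) = ncfR t := rfl

lemma pq_bounds : ∀ l : List ℤ, (∀ x ∈ l, 2 ≤ x) →
    1 ≤ ncfP l ∧ 0 ≤ ncfQ l ∧ ncfQ l + 1 ≤ ncfP l := by
  intro l
  induction l with
  | nil => intro _; simp [ncfP, ncfQ]
  | cons a t ih =>
    intro H
    obtain ⟨h1, h2, h3⟩ := ih (fun x hx => H x (List.mem_cons_of_mem a hx))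
    have ha : 2 ≤ a := H a List.mem_cons_self
    rw [ncfP_cons, ncfQ_cons]
    refine ⟨by nlinarith, by linarith, by nlinarith⟩

lemma rs_bounds : ∀ l : List ℤ, (∀ x ∈ l, 2 ≤ x) →
    1 ≤ ncfP l + ncfR l ∧ 1 ≤ ncfQ l + ncfS l ∧
      ncfQ l + ncfS l ≤ ncfP l + ncfR l := by
  intro l
  induction l with
  | nil => intro _; simp [ncfP, ncfQ, ncfR, ncfS]
  | cons a t ih =>
    intro H
    obtain ⟨h1, h2, h3⟩ := ih (fun x hx => H x (List.mem_cons_of_mem a hx))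
    have ha : 2 ≤ a := H a List.mem_cons_self
    rw [ncfP_cons, ncfQ_cons, ncfR_cons, ncfS_cons]
    refine ⟨by nlinarith, by nlinarith, by nlinarith⟩

lemma det_eq : ∀ l : List ℤ, ncfP l * ncfS l - ncfQ l * ncfR l = 1 := by
  intro l
  induction l with
  | nil => simp [ncfP, ncfQ, ncfR, ncfS]
  | cons a t ih =>
    rw [ncfP_cons, ncfQ_cons, ncfR_cons, ncfS_cons]
    linear_combination ih

lemma pr_append : ∀ (l : List ℤ) (c : ℤ),
    ncfP (l ++ [c]) = c * ncfP l + ncfR l ∧ ncfR (l ++ [c]) = -ncfP l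
  | [], c => by simp [ncfP, ncfR]
  | [a], c => by
      constructor
      · show ncfP [a, c] = _
        simp [ncfP, ncfR]; ring
      · show ncfR [a, c] = _
        simp [ncfP, ncfR]
  | a :: b :: t, c => by
      have ih1 := pr_append (b :: t) c
      have ih2 := pr_append t c
      constructor
      · show ncfP (a :: ((b :: t) ++ [c])) = _
        rw [show a :: ((b :: t) ++ [c]) = a :: b :: (t ++ [c]) from rfl]
        rw [show ncfP (a :: b :: (t ++ [c])) = a * ncfP (b :: (t ++ [c])) - ncfP (t ++ [c]) from rfl]
        rw [show (b :: (t ++ [c])) = (b :: t) ++ [c] from rfl, ih1.1, ih2.1]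
        rw [show ncfP (a :: b :: t) = a * ncfP (b :: t) - ncfP t from rfl,
          show ncfR (a :: b :: t) = a * ncfR (b :: t) - ncfR t from rfl]
        ring
      · show ncfR (a :: ((b :: t) ++ [c])) = _
        rw [show a :: ((b :: t) ++ [c]) = a :: b :: (t ++ [c]) from rfl]
        rw [show ncfR (a :: b :: (t ++ [c])) = a * ncfR (b :: (t ++ [c])) - ncfR (t ++ [c]) from rfl]
        rw [show (b :: (t ++ [c])) = (b :: t) ++ [c] from rfl, ih1.2, ih2.2]
        rw [show ncfP (a :: b :: t) = a * ncfP (b :: t) - ncfP t from rfl]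
        ring

lemma qs_append (l : List ℤ) (c : ℤ) :
    ncfQ (l ++ [c]) = c * ncfQ l + ncfS l ∧ ncfS (l ++ [c]) = -ncfQ l := by
  cases l with
  | nil => simp [ncfQ, ncfS, ncfP, ncfR]
  | cons a t =>
    constructor
    · show ncfQ (a :: (t ++ [c])) = _
      rw [ncfQ_cons, (pr_append t c).1, ncfQ_cons, ncfS_cons]
    · show ncfS (a :: (t ++ [c])) = _
      rw [ncfS_cons, (pr_append t c).2, ncfQ_cons]

lemma rr_nonpos (l : List ℤ) (H : ∀ x ∈ l, 2 ≤ x) : ncfR l ≤ 0 := by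
  rcases List.eq_nil_or_concat l with rfl | ⟨L, c, rfl⟩
  · simp [ncfR]
  · rw [List.concat_eq_append] at H ⊢
    rw [(pr_append L c).2]
    have := pq_bounds L (fun x hx => H x (by simp [hx]))
    linarith [this.1]

lemma rr_le_neg_one (l : List ℤ) (hl : l ≠ []) (H : ∀ x ∈ l, 2 ≤ x) : ncfR l ≤ -1 := by
  rcases List.eq_nil_or_concat l with rfl | ⟨L, c, rfl⟩
  · exact absurd rfl hl
  · rw [List.concat_eq_append] at H ⊢
    rw [(pr_append L c).2]
    have := pq_bounds L (fun x hx => H x (by simp [hx]))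
    linarith [this.1]

lemma qq_pos (l : List ℤ) (hl : l ≠ []) (H : ∀ x ∈ l, 2 ≤ x) : 1 ≤ ncfQ l := by
  cases l with
  | nil => exact absurd rfl hl
  | cons a t =>
    rw [ncfQ_cons]
    exact (pq_bounds t (fun x hx => H x (List.mem_cons_of_mem a hx))).1

lemma pp_two (l : List ℤ) (hl : l ≠ []) (H : ∀ x ∈ l, 2 ≤ x) : 2 ≤ ncfP l := by
  have h1 := qq_pos l hl H
  have h2 := (pq_bounds l H).2.2
  linarith

lemma ncf_eq_aux (t : List ℤ) : ∀ a : ℤ, (∀ x ∈ a :: t, 2 ≤ x) →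
    ncfZ (a :: t) = (ncfP (a :: t) : ℚ) / (ncfQ (a :: t)) := by
  induction t with
  | nil =>
    intro a _
    simp [ncfZ, ncf, ncfP, ncfQ]
  | cons b t' ih =>
    intro a H
    have Hbt : ∀ x ∈ b :: t', 2 ≤ x := fun x hx => H x (List.mem_cons_of_mem a hx)
    have ih' := ih b Hbt
    have hP : 1 ≤ ncfP (b :: t') := (pq_bounds _ Hbt).1
    have hPQ : (ncfP (b :: t') : ℚ) ≠ 0 := by
      exact_mod_cast (by omega : ncfP (b :: t') ≠ 0)
    have hstep : ncfZ (a :: b :: t') = (a : ℚ) - 1 / ncfZ (b :: t') := rfl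
    rw [hstep, ih', one_div_div,
      show ncfQ (a :: b :: t') = ncfP (b :: t') from rfl,
      show ncfP (a :: b :: t') = a * ncfP (b :: t') - ncfQ (b :: t') from ncfP_cons a (b :: t')]
    push_cast
    rw [eq_div_iff hPQ, sub_mul, div_mul_cancel₀ _ hPQ]

lemma ncf_eq (l : List ℤ) (hl : l ≠ []) (H : ∀ x ∈ l, 2 ≤ x) :
    ncfZ l = (ncfP l : ℚ) / (ncfQ l) := by
  cases l with
  | nil => exact absurd rfl hl
  | cons a t => exact ncf_eq_aux t a H

set_option maxHeartbeats 1000000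
theorem complementary_blowdown (a b : List ℤ) (ha : a ≠ []) (hb : b ≠ [])
    (h : Complementary a b) (hn : 2 ≤ b.length) (hlast : b.getLast hb = 2) :
    3 ≤ a.getLast ha ∧
      Complementary (a.dropLast ++ [a.getLast ha - 1]) b.dropLast := by
  obtain ⟨-, -, Ha, Hb, hsum⟩ := h
  set m := a.getLast ha with hm_def
  set d := a.dropLast with hd_def
  set e := b.dropLast with he_def
  have hae : d ++ [m] = a := List.dropLast_append_getLast ha
  have hbe : e ++ [(2 : ℤ)] = b := by
    rw [← hlast]; exact List.dropLast_append_getLast hb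
  have he_ne : e ≠ [] := by
    have : e.length = b.length - 1 := by simp [he_def]
    intro hc
    rw [hc] at this
    simp at this
    omega
  have Hd : ∀ x ∈ d, 2 ≤ x := fun x hx => Ha x (by rw [← hae]; exact List.mem_append_left _ hx)
  have He : ∀ x ∈ e, 2 ≤ x := fun x hx => Hb x (by rw [← hbe]; exact List.mem_append_left _ hx)
  have hm2 : 2 ≤ m := Ha m (List.getLast_mem ha)
  -- basic bounds
  obtain ⟨hpa1, hqa0, hqa_lt⟩ := pq_bounds a Ha
  obtain ⟨hpb1, hqb0, hqb_lt⟩ := pq_bounds b Hb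
  obtain ⟨hpd1, hqd0, hqd_lt⟩ := pq_bounds d Hd
  obtain ⟨hpe1, hqe0, hqe_lt⟩ := pq_bounds e He
  have hqa1 : 1 ≤ ncfQ a := qq_pos a ha Ha
  have hqb1 : 1 ≤ ncfQ b := qq_pos b hb Hb
  have hqe1 : 1 ≤ ncfQ e := qq_pos e he_ne He
  have hpa2 : 2 ≤ ncfP a := pp_two a ha Ha
  have hpe2 : 2 ≤ ncfP e := pp_two e he_ne He
  obtain ⟨hura, husa, hura2⟩ := rs_bounds a Ha
  -- append decompositions
  have hPa : ncfP a = m * ncfP d + ncfR d := by rw [← hae]; exact (pr_append d m).1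
  have hRa : ncfR a = -ncfP d := by rw [← hae]; exact (pr_append d m).2
  have hQa : ncfQ a = m * ncfQ d + ncfS d := by rw [← hae]; exact (qs_append d m).1
  have hSa : ncfS a = -ncfQ d := by rw [← hae]; exact (qs_append d m).2
  have hPb : ncfP b = 2 * ncfP e + ncfR e := by rw [← hbe]; exact (pr_append e 2).1
  have hRb : ncfR b = -ncfP e := by rw [← hbe]; exact (pr_append e 2).2
  have hQb : ncfQ b = 2 * ncfQ e + ncfS e := by rw [← hbe]; exact (qs_append e 2).1
  have hSb : ncfS b = -ncfQ e := by rw [← hbe]; exact (qs_append e 2).2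
  -- the complementarity equation in terms of P, Q
  have hpaQ : (ncfP a : ℚ) ≠ 0 := by exact_mod_cast (by omega : ncfP a ≠ 0)
  have hpbQ : (ncfP b : ℚ) ≠ 0 := by exact_mod_cast (by omega : ncfP b ≠ 0)
  rw [ncf_eq a ha Ha, ncf_eq b hb Hb, one_div_div, one_div_div] at hsum
  have hEq : (ncfQ a * ncfP b + ncfQ b * ncfP a : ℚ) = ncfP a * ncfP b := by
    field_simp at hsum
    linarith
  have E : ncfQ a * ncfP b + ncfQ b * ncfP a = ncfP a * ncfP b := by exact_mod_cast hEq
  -- coprimality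
  have copA : IsCoprime (ncfP a) (ncfQ a) :=
    ⟨ncfS a, -ncfR a, by linear_combination det_eq a⟩
  have copA' : IsCoprime (ncfP a - ncfQ a) (ncfQ a) :=
    ⟨ncfS a, ncfS a - ncfR a, by linear_combination det_eq a⟩
  have copB' : IsCoprime (ncfP b - ncfQ b) (ncfQ b) :=
    ⟨ncfS b, ncfS b - ncfR b, by linear_combination det_eq b⟩
  have hE2 : (ncfP a - ncfQ a) * (ncfP b - ncfQ b) = ncfQ a * ncfQ b := by
    linear_combination -E
  have hd1 : ncfP a - ncfQ a ∣ ncfQ b :=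
    copA'.dvd_of_dvd_mul_left ⟨ncfP b - ncfQ b, hE2.symm⟩
  have hd2 : ncfP b - ncfQ b ∣ ncfQ a := by
    apply copB'.dvd_of_dvd_mul_left
    exact ⟨ncfP a - ncfQ a, by linear_combination -hE2⟩
  have hle1 : ncfP a - ncfQ a ≤ ncfQ b := Int.le_of_dvd (by linarith) hd1
  have hle2 : ncfP b - ncfQ b ≤ ncfQ a := Int.le_of_dvd (by linarith) hd2
  have t1 : (ncfP a - ncfQ a) * (ncfP b - ncfQ b) ≤ (ncfP a - ncfQ a) * ncfQ a :=
    mul_le_mul_of_nonneg_left hle2 (by linarith)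
  have t3 : ncfQ b ≤ ncfP a - ncfQ a :=
    le_of_mul_le_mul_right (by linarith only [hE2, t1]) (by linarith : (0 : ℤ) < ncfQ a)
  have t1' : (ncfP a - ncfQ a) * (ncfP b - ncfQ b) ≤ ncfQ b * (ncfP b - ncfQ b) :=
    mul_le_mul_of_nonneg_right hle1 (by linarith)
  have t3' : ncfQ a ≤ ncfP b - ncfQ b :=
    le_of_mul_le_mul_right (by linarith only [hE2, t1']) (by linarith : (0 : ℤ) < ncfQ b)
  have key1 : ncfP a - ncfQ a = ncfQ b := le_antisymm hle1 t3
  have key2 : ncfP b - ncfQ b = ncfQ a := le_antisymm hle2 t3'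
  have hpp : ncfP b = ncfP a := by linarith
  have hqq : ncfQ b = ncfP a - ncfQ a := by linarith
  -- determine ncfR b and ncfS b
  have detb' : ncfP a * ncfS b - (ncfP a - ncfQ a) * ncfR b = 1 := by
    have := det_eq b
    rw [hpp, hqq] at this
    exact this
  have h6 : ncfP a ∣ ncfQ a * (ncfR a + ncfR b) :=
    ⟨ncfS a + ncfR b - ncfS b, by linear_combination detb' - det_eq a⟩
  have h7 : ncfP a ∣ ncfR a + ncfR b := copA.dvd_of_dvd_mul_left h6
  have hra1 : ncfR a ≤ -1 := rr_le_neg_one a ha Ha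
  have hrb1 : ncfR b ≤ -1 := rr_le_neg_one b hb Hb
  have hra2 : 1 - ncfP a ≤ ncfR a := by linarith
  have hrb2 : 1 - ncfP a ≤ ncfR b := by
    have := (rs_bounds b Hb).1
    linarith
  obtain ⟨k, hk⟩ := h7
  have hk1 : k ≤ -1 := by
    by_contra hc
    push_neg at hc
    have hk0 : 0 ≤ k := by omega
    have : 0 ≤ ncfP a * k := mul_nonneg (by linarith) hk0
    linarith
  have hk2 : -1 ≤ k := by
    by_contra hc
    push_neg at hc
    have hk0 : k ≤ -2 := by omega
    have : ncfP a * k ≤ ncfP a * (-2) := mul_le_mul_of_nonneg_left hk0 (by linarith)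
    linarith
  have hkk : k = -1 := le_antisymm hk1 hk2
  have hrab : ncfR a + ncfR b = -ncfP a := by rw [hk, hkk]; ring
  have hrb' : ncfR b = -ncfP a - ncfR a := by linarith
  have h8 : ncfP a * ncfS b = ncfP a * (ncfS a + ncfQ a - ncfP a - ncfR a) := by
    linear_combination detb' - det_eq a + (ncfP a - ncfQ a) * hrb'
  have hsb : ncfS b = ncfS a + ncfQ a - ncfP a - ncfR a :=
    mul_left_cancel₀ (by omega : ncfP a ≠ 0) h8
  -- express data of e
  have hpe : ncfP e = ncfP a + ncfR a := by linarith [hRb]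
  have hqe : ncfQ e = ncfP a + ncfR a - ncfS a - ncfQ a := by
    have := hSb
    rw [hsb] at this
    linarith
  have hpd : ncfP d = -ncfR a := by linarith [hRa]
  -- first claim: 3 ≤ m
  have hre : ncfR e ≤ 0 := rr_nonpos e He
  have hrd : ncfR d ≤ 0 := rr_nonpos d Hd
  have hpale : ncfP a ≤ 2 * ncfP e := by
    rw [← hpp, hPb]; linarith
  have hm3 : 3 ≤ m := by
    rcases (by omega : m = 2 ∨ 3 ≤ m) with hm | hm
    · exfalso
      -- m = 2 leads to contradiction
      have hrd0 : 0 ≤ ncfR d := by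
        have : ncfP a = 2 * ncfP d + ncfR d := by rw [hPa, hm]
        have hpd' : ncfP d = ncfP a - ncfP e := by rw [hpd]; linarith
        linarith only [this, hpd', hpale]
      have hd_nil : d = [] := by
        by_contra hc
        have := rr_le_neg_one d hc Hd
        omega
      have : ncfP d = 1 := by rw [hd_nil]; rfl
      have hra : ncfR a = -1 := by omega
      have : ncfP a = 2 := by rw [hPa, hm]; omega
      have : ncfP e = 1 := by omega
      omega
    · exact hm
  refine ⟨hm3, ?_, he_ne, ?_, He, ?_⟩
  · simp
  · intro x hx
    rcases List.mem_append.mp hx with hx | hx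
    · exact Hd x hx
    · have : x = m - 1 := by simpa using hx
      omega
  · -- the continued fraction identity for the blown-down pair
    set a' : List ℤ := d ++ [m - 1] with ha'_def
    have Ha' : ∀ x ∈ a', 2 ≤ x := by
      intro x hx
      rcases List.mem_append.mp hx with hx | hx
      · exact Hd x hx
      · have : x = m - 1 := by simpa using hx
        omega
    have ha'_ne : a' ≠ [] := by simp [ha'_def]
    have hPa' : ncfP a' = ncfP e := by
      rw [ha'_def, (pr_append d (m - 1)).1, hpe]
      have : ncfP a = m * ncfP d + ncfR d := hPa
      rw [hpd] at this ⊢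
      linarith
    have hQa' : ncfQ a' = ncfQ a + ncfS a := by
      rw [ha'_def, (qs_append d (m - 1)).1]
      have : ncfQ a = m * ncfQ d + ncfS d := hQa
      have hqd : ncfQ d = -ncfS a := by omega
      rw [hqd] at this ⊢
      linarith
    have hsum' : ncfQ a' + ncfQ e = ncfP e := by
      rw [hQa', hqe, hpe]; ring
    have hqa'1 : 1 ≤ ncfQ a' := qq_pos a' ha'_ne Ha'
    rw [ncf_eq a' ha'_ne Ha', ncf_eq e he_ne He, one_div_div, one_div_div, hPa']
    have hpeQ : (ncfP e : ℚ) ≠ 0 := by exact_mod_cast (by omega : ncfP e ≠ 0)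
    rw [← add_div]
    rw [show ((ncfQ a' : ℚ) + ncfQ e) = (ncfP e : ℚ) by exact_mod_cast hsum']
    exact div_self hpeQ
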